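/- Integral minimization lemma: let 0 < t₁ < t₂, c, ν > 0, and ψ: [t₁,t₂] → ℝ continuous. Then min_{s∈[t₁,t₂]} ( ψ(s) − (1/c)∫_s^{t₂} τ^{−ν} ψ(τ)² dτ ) ≤ (c/(ν+1))·(t₂^{ν+1} − t₁^{ν+1})/(t₂−t₁)². -/

import Mathlib

open Set intervalIntegral MeasureTheory

lemma aux_pointwise (s ν x : ℝ) (hs : 0 < s) :
    2 * x - s ^ (-ν) * x ^ 2 ≤ s ^ ν := by
  have hp : (0:ℝ) < s ^ (-ν) := Real.rpow_pos_of_pos hs _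
  have h1 : s ^ (-ν) * s ^ ν = 1 := by
    rw [← Real.rpow_add hs]; simp
  have h2 : s ^ (-ν) * (x - s ^ ν) ^ 2 = s ^ (-ν) * x ^ 2 - 2 * x + s ^ ν := by
    linear_combination (s ^ ν - 2 * x) * h1
  have h3 := mul_nonneg hp.le (sq_nonneg (x - s ^ ν))
  rw [h2] at h3
  linarith

lemma aux_main (t₁ t₂ c ν : ℝ) (ht₁ : 0 < t₁) (ht : t₁ < t₂)
    (hc : 0 < c) (hν : 0 < ν) (φ : ℝ → ℝ) (hφ : Continuous φ) :
    ∃ s ∈ Set.Icc t₁ t₂,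
      φ s - (1 / c) * ∫ τ in s..t₂, τ ^ (-ν) * (φ τ) ^ 2
        ≤ (c / (ν + 1)) * (t₂ ^ (ν + 1) - t₁ ^ (ν + 1)) / (t₂ - t₁) ^ 2 := by
  have hIcc_sub : Set.Icc t₁ t₂ ⊆ Set.Ioi (0:ℝ) := fun x hx => lt_of_lt_of_le ht₁ hx.1
  set g : ℝ → ℝ := fun τ => τ ^ (-ν) * (φ τ) ^ 2 with hg_def
  have hg_cont : ContinuousOn g (Set.Ioi (0:ℝ)) := by
    apply ContinuousOn.mul
    · exact continuousOn_id.rpow_const (fun x hx => Or.inl (ne_of_gt hx))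
    · exact (hφ.pow 2).continuousOn
  set G : ℝ → ℝ := fun u => ∫ τ in u..t₂, g τ with hG_def
  have huIcc : Set.uIcc t₁ t₂ = Set.Icc t₁ t₂ := Set.uIcc_of_le ht.le
  have hsub' : ∀ s ∈ Set.Icc t₁ t₂, Set.uIcc s t₂ ⊆ Set.Icc t₁ t₂ := by
    intro s hs
    rw [Set.uIcc_of_le hs.2]
    exact Set.Icc_subset_Icc hs.1 le_rfl
  have hg_int : ∀ s ∈ Set.Icc t₁ t₂, IntervalIntegrable g volume s t₂ := by
    intro s hs
    exact ((hg_cont.mono (fun x hx => hIcc_sub (hsub' s hs hx)))).intervalIntegrable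
  have hGderiv : ∀ s ∈ Set.Icc t₁ t₂, HasDerivAt G (-(g s)) s := by
    intro s hs
    have hspos : 0 < s := hIcc_sub hs
    refine intervalIntegral.integral_hasDerivAt_left (hg_int s hs) ?_ ?_
    · exact hg_cont.stronglyMeasurableAtFilter isOpen_Ioi s hspos
    · exact hg_cont.continuousAt (Ioi_mem_nhds hspos)
  have hGcont : ContinuousOn G (Set.Icc t₁ t₂) :=
    fun s hs => ((hGderiv s hs).continuousAt).continuousWithinAt
  set η : ℝ → ℝ := fun s => 2 / c * (s - t₁) with hη_def
  set H : ℝ → ℝ := fun s => 1 / c * (s - t₁) ^ 2 with hH_def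
  have hη_cont : Continuous η := by fun_prop
  have hH_cont : Continuous H := by fun_prop
  have hHderiv : ∀ s : ℝ, HasDerivAt H (η s) s := by
    intro s
    have h1 : HasDerivAt (fun x : ℝ => x - t₁) 1 s := (hasDerivAt_id s).sub_const t₁
    have h2 : HasDerivAt (fun y : ℝ => 1 / c * (y - t₁) ^ 2)
        (1 / c * (((2:ℕ):ℝ) * (s - t₁) ^ (2 - 1) * 1)) s := (h1.pow 2).const_mul (1 / c)
    convert h2 using 1
    show 2 / c * (s - t₁) = _
    ring
  -- Integration by parts : ∫ η G = ∫ H g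
  have hg_cont' : ContinuousOn g (Set.uIcc t₁ t₂) := by
    rw [huIcc]; exact hg_cont.mono hIcc_sub
  have hIBP : ∫ s in t₁..t₂, η s * G s = ∫ s in t₁..t₂, H s * g s := by
    have := intervalIntegral.integral_mul_deriv_eq_deriv_mul
      (u := H) (u' := η) (v := G) (v' := fun s => -(g s))
      (fun x hx => hHderiv x)
      (fun x hx => hGderiv x (huIcc ▸ hx))
      (hη_cont.intervalIntegrable _ _)
      ((hg_cont'.intervalIntegrable).neg)
    have hGt₂ : G t₂ = 0 := intervalIntegral.integral_same
    have hHt₁ : H t₁ = 0 := by simp [hH_def]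
    have h2 : ∫ x in t₁..t₂, H x * -(g x) = - ∫ x in t₁..t₂, H x * g x := by
      rw [← intervalIntegral.integral_neg]
      congr 1; ext x; ring
    rw [h2, hGt₂, hHt₁] at this
    linarith [this]
  -- F and its minimum
  set F : ℝ → ℝ := fun s => φ s - 1 / c * G s with hF_def
  have hFcont : ContinuousOn F (Set.Icc t₁ t₂) :=
    hφ.continuousOn.sub (continuousOn_const.mul hGcont)
  obtain ⟨s₀, hs₀, hmin⟩ :=
    isCompact_Icc.exists_isMinOn (Set.nonempty_Icc.mpr ht.le) hFcont
  refine ⟨s₀, hs₀, ?_⟩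
  have hηF_int : IntervalIntegrable (fun s => η s * F s) volume t₁ t₂ := by
    apply ContinuousOn.intervalIntegrable
    exact (hη_cont.continuousOn.mul (huIcc ▸ hFcont))
  have hint_η : ∫ s in t₁..t₂, η s = (t₂ - t₁) ^ 2 / c := by
    rw [intervalIntegral.integral_eq_sub_of_hasDerivAt (fun s _ => hHderiv s)
      (hη_cont.intervalIntegrable _ _)]
    simp [hH_def]
    ring
  -- step: F s₀ * ((t₂ - t₁)^2 / c) ≤ ∫ η F
  have hstep1 : F s₀ * ((t₂ - t₁) ^ 2 / c) ≤ ∫ s in t₁..t₂, η s * F s := by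
    have hmono : ∫ s in t₁..t₂, η s * F s₀ ≤ ∫ s in t₁..t₂, η s * F s := by
      apply intervalIntegral.integral_mono_on ht.le
      · exact (hη_cont.mul continuous_const).intervalIntegrable _ _
      · exact hηF_int
      · intro x hx
        have hη_nn : 0 ≤ η x := by
          have : 0 ≤ x - t₁ := by linarith [hx.1]
          have h2c : 0 ≤ 2 / c := by positivity
          exact mul_nonneg h2c this
        exact mul_le_mul_of_nonneg_left (hmin hx) hη_nn
    calc F s₀ * ((t₂ - t₁) ^ 2 / c) = (∫ s in t₁..t₂, η s) * F s₀ := by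
          rw [hint_η]; ring
      _ = ∫ s in t₁..t₂, η s * F s₀ := (intervalIntegral.integral_mul_const _ _).symm
      _ ≤ _ := hmono
  -- step: ∫ η F = ∫ (η φ - (1/c) H g)
  have hstep2 : ∫ s in t₁..t₂, η s * F s
      = ∫ s in t₁..t₂, (η s * φ s - 1 / c * (H s * g s)) := by
    have e1 : ∫ s in t₁..t₂, η s * F s
        = (∫ s in t₁..t₂, η s * φ s) - 1 / c * ∫ s in t₁..t₂, η s * G s := by
      have hi1 : IntervalIntegrable (fun s => η s * φ s) volume t₁ t₂ :=
        (hη_cont.mul hφ).intervalIntegrable _ _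
      have hi2 : IntervalIntegrable (fun s => 1 / c * (η s * G s)) volume t₁ t₂ := by
        apply ContinuousOn.intervalIntegrable
        exact continuousOn_const.mul (hη_cont.continuousOn.mul (huIcc ▸ hGcont))
      have : (fun s => η s * F s) = fun s => η s * φ s - 1 / c * (η s * G s) := by
        ext s; simp only [hF_def]; ring
      rw [this, intervalIntegral.integral_sub hi1 hi2, intervalIntegral.integral_const_mul]
    have hi3 : IntervalIntegrable (fun s => η s * φ s) volume t₁ t₂ :=
      (hη_cont.mul hφ).intervalIntegrable _ _
    have hi4 : IntervalIntegrable (fun s => 1 / c * (H s * g s)) volume t₁ t₂ := by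
      apply ContinuousOn.intervalIntegrable
      exact continuousOn_const.mul (hH_cont.continuousOn.mul hg_cont')
    rw [e1, hIBP, ← intervalIntegral.integral_const_mul,
      ← intervalIntegral.integral_sub hi3 hi4]
  -- step: pointwise bound and integral of s^ν
  have hstep3 : ∫ s in t₁..t₂, (η s * φ s - 1 / c * (H s * g s))
      ≤ ∫ s in t₁..t₂, s ^ ν := by
    apply intervalIntegral.integral_mono_on ht.le
    · apply ContinuousOn.intervalIntegrable
      exact ((hη_cont.continuousOn.mul hφ.continuousOn).sub
        (continuousOn_const.mul (hH_cont.continuousOn.mul hg_cont')))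
    · apply ContinuousOn.intervalIntegrable
      exact continuousOn_id.rpow_const (fun x _ => Or.inr hν.le)
    · intro s hs
      have hspos : 0 < s := hIcc_sub hs
      have hkey := aux_pointwise s ν ((s - t₁) * φ s / c) hspos
      have heq : η s * φ s - 1 / c * (H s * g s)
          = 2 * ((s - t₁) * φ s / c) - s ^ (-ν) * ((s - t₁) * φ s / c) ^ 2 := by
        simp only [hη_def, hH_def, hg_def]
        field_simp
      rw [heq]; exact hkey
  have hint_rpow : ∫ s in t₁..t₂, s ^ ν = (t₂ ^ (ν + 1) - t₁ ^ (ν + 1)) / (ν + 1) :=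
    integral_rpow (Or.inl (by linarith))
  -- combine
  have hfinal : F s₀ * ((t₂ - t₁) ^ 2 / c)
      ≤ (t₂ ^ (ν + 1) - t₁ ^ (ν + 1)) / (ν + 1) := by
    calc F s₀ * ((t₂ - t₁) ^ 2 / c) ≤ ∫ s in t₁..t₂, η s * F s := hstep1
      _ = _ := hstep2
      _ ≤ ∫ s in t₁..t₂, s ^ ν := hstep3
      _ = _ := hint_rpow
  have hB : 0 < (t₂ - t₁) ^ 2 / c := by
    have : 0 < t₂ - t₁ := by linarith
    positivity
  have := (le_div_iff₀ hB).mpr hfinal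
  calc φ s₀ - 1 / c * ∫ τ in s₀..t₂, τ ^ (-ν) * (φ τ) ^ 2 = F s₀ := rfl
    _ ≤ ((t₂ ^ (ν + 1) - t₁ ^ (ν + 1)) / (ν + 1)) / ((t₂ - t₁) ^ 2 / c) := this
    _ = (c / (ν + 1)) * (t₂ ^ (ν + 1) - t₁ ^ (ν + 1)) / (t₂ - t₁) ^ 2 := by
        have h1 : t₂ - t₁ ≠ 0 := by linarith
        have h2 : ν + 1 ≠ 0 := by linarith
        field_simp

theorem integral_minimization (t₁ t₂ c ν : ℝ) (ht₁ : 0 < t₁) (ht : t₁ < t₂)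
    (hc : 0 < c) (hν : 0 < ν) (ψ : ℝ → ℝ) (hψ : ContinuousOn ψ (Set.Icc t₁ t₂)) :
    ∃ s ∈ Set.Icc t₁ t₂,
      ψ s - (1 / c) * ∫ τ in s..t₂, τ ^ (-ν) * (ψ τ) ^ 2
        ≤ (c / (ν + 1)) * (t₂ ^ (ν + 1) - t₁ ^ (ν + 1)) / (t₂ - t₁) ^ 2 := by
  set φ : ℝ → ℝ := fun x => ψ (max t₁ (min x t₂)) with hφ_def
  have hmem : ∀ x : ℝ, max t₁ (min x t₂) ∈ Set.Icc t₁ t₂ := by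
    intro x
    constructor
    · exact le_max_left _ _
    · exact max_le ht.le (min_le_right _ _)
  have hφ : Continuous φ :=
    hψ.comp_continuous (continuous_const.max (continuous_id.min continuous_const)) hmem
  have hφeq : ∀ x ∈ Set.Icc t₁ t₂, φ x = ψ x := by
    intro x hx
    simp only [hφ_def]
    rw [min_eq_left hx.2, max_eq_right hx.1]
  obtain ⟨s, hs, hle⟩ := aux_main t₁ t₂ c ν ht₁ ht hc hν φ hφ
  refine ⟨s, hs, ?_⟩
  have hintg : (∫ τ in s..t₂, τ ^ (-ν) * (φ τ) ^ 2)
      = ∫ τ in s..t₂, τ ^ (-ν) * (ψ τ) ^ 2 := by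
    apply intervalIntegral.integral_congr
    intro x hx
    have hx' : x ∈ Set.Icc t₁ t₂ := by
      rw [Set.uIcc_of_le hs.2] at hx
      exact ⟨le_trans hs.1 hx.1, hx.2⟩
    show x ^ (-ν) * φ x ^ 2 = x ^ (-ν) * ψ x ^ 2
    rw [hφeq x hx']
  rw [← hφeq s hs, ← hintg]
  exact hle
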